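/- Let F be an algebraically closed field, α, β ∈ F with α ≠ 0 and α ≠ 1, let φ be the F-algebra automorphism of F[t] with φ(t) = αt + β, and set t̃ = (α − 1)t + β. Let J be a nonzero ideal of F[t] with φ(J) ⊆ J. Then: (i) if α is not a root of unity, J is a proper ideal maximal among proper φ-stable ideals of F[t] if and only if J is the principal ideal generated by t̃; (ii) if α is a primitive ℓth root of unity, J is a proper ideal maximal among proper φ-stable ideals of F[t] if and only if J is the principal ideal generated by t̃, or J is the principal ideal generated by t̃^ℓ − ξ for some nonzero ξ ∈ F. -/

import Mathlib

open Polynomial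

section Aux

variable {F : Type*} [Field F]

private lemma algEquiv_apply_eq_aeval (e : F[X] ≃ₐ[F] F[X]) (f : F[X]) :
    e f = aeval (e X) f := by
  have h : (e : F[X] →ₐ[F] F[X]) = aeval (e X) := Polynomial.algHom_ext (by simp)
  exact DFunLike.congr_fun h f

private lemma coeff_aeval_C_mul_X (a : F) (f : F[X]) (i : ℕ) :
    (aeval (C a * X) f).coeff i = a ^ i * f.coeff i := by
  induction f using Polynomial.induction_on' with
  | add p q hp hq => simp [hp, hq, mul_add]
  | monomial n c =>
    simp only [aeval_monomial, algebraMap_eq, mul_pow, ← C_pow, coeff_monomial]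
    rw [coeff_C_mul, coeff_C_mul, coeff_X_pow]
    by_cases h : i = n
    · subst h; simp [mul_comm]
    · simp [h, Ne.symm h]

private lemma stable_span {σ : F[X] ≃ₐ[F] F[X]} {p : F[X]} {c : F} (h : σ p = C c * p) :
    ∀ f ∈ Ideal.span {p}, σ f ∈ Ideal.span {p} := by
  intro f hf
  rw [Ideal.mem_span_singleton] at hf ⊢
  obtain ⟨q, rfl⟩ := hf
  rw [map_mul, h]
  exact ⟨C c * σ q, by ring⟩

private lemma order_dvd {α : F} {ℓ : ℕ} (hℓ1 : 1 ≤ ℓ) (hℓ : α ^ ℓ = 1)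
    (hmin : ∀ k : ℕ, 1 ≤ k → k < ℓ → α ^ k ≠ 1) {n : ℕ} (hn : α ^ n = 1) : ℓ ∣ n := by
  have h1 : α ^ (n % ℓ) = 1 := by
    conv at hn => rw [← Nat.div_add_mod n ℓ]
    rwa [pow_add, pow_mul, hℓ, one_pow, one_mul] at hn
  rcases Nat.eq_zero_or_pos (n % ℓ) with h | h
  · exact Nat.dvd_of_mod_eq_zero h
  · exact absurd h1 (hmin _ h (Nat.mod_lt _ hℓ1))

private lemma eq_expand_contract {ℓ : ℕ} (hℓ : ℓ ≠ 0) {g : F[X]}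
    (h : ∀ i, ¬ ℓ ∣ i → g.coeff i = 0) : expand F ℓ (contract ℓ g) = g := by
  ext n
  rw [coeff_expand hℓ.bot_lt]
  split_ifs with hd
  · rw [coeff_contract hℓ, Nat.div_mul_cancel hd]
  · exact (h n hd).symm

private lemma exists_gen {α : F} (hα0 : α ≠ 0) (σ : F[X] ≃ₐ[F] F[X])
    (hσ : ∀ f, σ f = aeval (C α * X) f)
    (J : Ideal F[X]) (hJbot : J ≠ ⊥) (hstab : ∀ f ∈ J, σ f ∈ J) :
    ∃ g : F[X], g ≠ 0 ∧ J = Ideal.span {g} ∧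
      ∀ i, g.coeff i ≠ 0 → α ^ i = α ^ g.natDegree := by
  obtain ⟨g, hg⟩ : ∃ g, J = Ideal.span {g} :=
    ⟨(IsPrincipalIdealRing.principal J).generator,
      (Submodule.IsPrincipal.span_singleton_generator J).symm⟩
  have hg0 : g ≠ 0 := by
    intro h; apply hJbot; rw [hg, h, Ideal.span_singleton_eq_bot]
  have hgJ : g ∈ J := by rw [hg]; exact Ideal.subset_span rfl
  have hdvd : g ∣ σ g := by
    have := hstab g hgJ; rwa [hg, Ideal.mem_span_singleton] at this
  have hσg0 : σ g ≠ 0 := fun h => hg0 (by simpa using σ.injective (h.trans (map_zero σ).symm))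
  have hdeg : (σ g).natDegree = g.natDegree := by
    rw [hσ, ← comp_eq_aeval, natDegree_comp, natDegree_C_mul_X α hα0, mul_one]
  obtain ⟨q, hq⟩ := hdvd
  have hq0 : q ≠ 0 := by rintro rfl; rw [mul_zero] at hq; exact hσg0 hq
  have hqdeg : q.natDegree = 0 := by
    have := hdeg; rw [hq, natDegree_mul hg0 hq0] at this; omega
  have hqC : q = C (q.coeff 0) := eq_C_of_natDegree_eq_zero hqdeg
  set c := q.coeff 0 with hc
  have hkey : ∀ i, α ^ i * g.coeff i = c * g.coeff i := by
    intro i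
    have h1 : (σ g).coeff i = α ^ i * g.coeff i := by rw [hσ, coeff_aeval_C_mul_X]
    have h2 : (σ g).coeff i = c * g.coeff i := by
      rw [hq, hqC, mul_comm, coeff_C_mul]
    rw [← h1, h2]
  have hcn : c = α ^ g.natDegree := by
    have h3 := hkey g.natDegree
    have hl : g.coeff g.natDegree ≠ 0 := by
      rw [← leadingCoeff]; exact leadingCoeff_ne_zero.mpr hg0
    exact (mul_right_cancel₀ hl h3).symm
  refine ⟨g, hg0, hg, fun i hi => ?_⟩
  have h4 := hkey i
  rw [hcn] at h4
  exact mul_right_cancel₀ hi h4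

private lemma isUnit_of_natDegree_zero {g : F[X]} (hg : g ≠ 0) (h : g.natDegree = 0) :
    IsUnit g := by
  rw [eq_C_of_natDegree_eq_zero h] at hg ⊢
  exact isUnit_C.mpr (isUnit_iff_ne_zero.mpr (by simpa using hg))

private lemma pow_sub_eq_one {α : F} (hα0 : α ≠ 0) {i n : ℕ} (hin : i ≤ n)
    (h : α ^ i = α ^ n) : α ^ (n - i) = 1 := by
  have h2 : α ^ i * α ^ (n - i) = α ^ i * 1 := by
    rw [mul_one, ← pow_add, Nat.add_sub_cancel' hin, h]
  exact mul_left_cancel₀ (pow_ne_zero _ hα0) h2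

private lemma comap_comap_symm (e : F[X] ≃ₐ[F] F[X]) (K : Ideal F[X]) :
    Ideal.comap e (Ideal.comap e.symm K) = K := by
  ext f
  simp [Ideal.mem_comap]

private lemma comap_span_apply (e : F[X] ≃ₐ[F] F[X]) (p : F[X]) :
    Ideal.comap e (Ideal.span {e p}) = Ideal.span {p} := by
  ext f
  rw [Ideal.mem_comap, Ideal.mem_span_singleton, Ideal.mem_span_singleton]
  constructor
  · intro h
    have h2 := map_dvd e.symm h
    simpa using h2
  · exact fun ⟨q, hq⟩ => ⟨e q, by rw [hq, map_mul]⟩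

private lemma comap_top_iff (e : F[X] ≃ₐ[F] F[X]) (K : Ideal F[X]) :
    Ideal.comap e K = ⊤ ↔ K = ⊤ := by
  constructor
  · intro h
    rw [Ideal.eq_top_iff_one]
    have h1 : (1 : F[X]) ∈ Ideal.comap e K := by rw [h]; trivial
    simpa using h1
  · rintro rfl; exact Ideal.comap_top

/-- The core case: classification of maximal stable ideals for `σ : f(X) ↦ f(αX)`. -/
private theorem core {F : Type*} [Field F] [IsAlgClosed F] (α : F) (hα0 : α ≠ 0)
    (σ : F[X] ≃ₐ[F] F[X]) (hσ : ∀ f, σ f = aeval (C α * X) f)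
    (J : Ideal F[X]) (hJbot : J ≠ ⊥) (hstab : ∀ f ∈ J, σ f ∈ J) :
    ((∀ k : ℕ, 1 ≤ k → α ^ k ≠ 1) →
      ((J ≠ ⊤ ∧ ∀ J' : Ideal F[X],
          J ≤ J' → J' ≠ ⊤ → (∀ f ∈ J', σ f ∈ J') → J' = J) ↔
        J = Ideal.span {X})) ∧
    (∀ ℓ : ℕ, 1 ≤ ℓ → α ^ ℓ = 1 → (∀ k : ℕ, 1 ≤ k → k < ℓ → α ^ k ≠ 1) →
      ((J ≠ ⊤ ∧ ∀ J' : Ideal F[X],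
          J ≤ J' → J' ≠ ⊤ → (∀ f ∈ J', σ f ∈ J') → J' = J) ↔
        (J = Ideal.span {X} ∨
          ∃ ξ : F, ξ ≠ 0 ∧ J = Ideal.span {X ^ ℓ - C ξ}))) := by
  have hσX : σ X = C α * X := by rw [hσ, aeval_X]
  have hXstab : ∀ f ∈ Ideal.span {(X : F[X])}, σ f ∈ Ideal.span {(X : F[X])} :=
    stable_span hσX
  have hXtop : (Ideal.span {(X : F[X])}) ≠ ⊤ := by
    rw [Ne, Ideal.span_singleton_eq_top]; exact not_isUnit_X
  have hXmax : (Ideal.span {(X : F[X])}).IsMaximal :=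
    PrincipalIdealRing.isMaximal_of_irreducible irreducible_X
  obtain ⟨g, hg0, hgJ, hgcoeff⟩ := exists_gen hα0 σ hσ J hJbot hstab
  have hdegpos : J ≠ ⊤ → 1 ≤ g.natDegree := by
    intro htop
    rcases Nat.eq_zero_or_pos g.natDegree with h | h
    · exfalso; apply htop; rw [hgJ, Ideal.span_singleton_eq_top]
      exact isUnit_of_natDegree_zero hg0 h
    · exact h
  have hcase0 : g.coeff 0 = 0 →
      (∀ J' : Ideal F[X], J ≤ J' → J' ≠ ⊤ → (∀ f ∈ J', σ f ∈ J') → J' = J) →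
      J = Ideal.span {X} := by
    intro h0 hmax
    have hle : J ≤ Ideal.span {X} := by
      rw [hgJ, Ideal.span_le, Set.singleton_subset_iff]
      exact Ideal.mem_span_singleton.mpr (X_dvd_iff.mpr h0)
    exact (hmax _ hle hXtop hXstab).symm
  constructor
  · -- part (i)
    intro hnru
    constructor
    · rintro ⟨htop, hmax⟩
      apply hcase0 _ hmax
      by_contra h0
      have h1 : α ^ 0 = α ^ g.natDegree := hgcoeff 0 h0
      have h2 := pow_sub_eq_one hα0 (Nat.zero_le _) h1
      rw [Nat.sub_zero] at h2
      exact hnru _ (hdegpos htop) h2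
    · rintro rfl
      exact ⟨hXtop, fun J' hle hne _ => (hXmax.eq_of_le hne hle).symm⟩
  · -- part (ii)
    intro ℓ hℓ1 hℓ hmin
    have hℓ0 : ℓ ≠ 0 := by omega
    have hstabξ : ∀ ξ : F, ∀ f ∈ Ideal.span {X ^ ℓ - C ξ},
        σ f ∈ Ideal.span {X ^ ℓ - C ξ} := by
      intro ξ
      apply stable_span (c := 1)
      rw [map_sub, map_pow, hσX, mul_pow, ← C_pow, hℓ, C_1, one_mul]
      have h1 : σ (C ξ) = C ξ := by rw [hσ, aeval_C, algebraMap_eq]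
      rw [h1, one_mul]
    have hξ0 : ∀ ξ : F, (X ^ ℓ - C ξ : F[X]) ≠ 0 := fun ξ => X_pow_sub_C_ne_zero hℓ1 ξ
    have hξtop : ∀ ξ : F, (Ideal.span {(X ^ ℓ - C ξ : F[X])}) ≠ ⊤ := by
      intro ξ
      rw [Ne, Ideal.span_singleton_eq_top]
      intro hu
      have h1 := natDegree_eq_zero_of_isUnit hu
      rw [natDegree_X_pow_sub_C] at h1
      omega
    constructor
    · rintro ⟨htop, hmax⟩
      by_cases h0 : g.coeff 0 = 0
      · exact Or.inl (hcase0 h0 hmax)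
      · right
        have hn1 : α ^ g.natDegree = 1 := by
          have h1 : α ^ 0 = α ^ g.natDegree := hgcoeff 0 h0
          rwa [pow_zero, eq_comm] at h1
        have hcoeffdvd : ∀ i, ¬ ℓ ∣ i → g.coeff i = 0 := by
          intro i hi
          by_contra hci
          exact hi (order_dvd hℓ1 hℓ hmin ((hgcoeff i hci).trans hn1))
        have hexp : expand F ℓ (contract ℓ g) = g := eq_expand_contract hℓ0 hcoeffdvd
        set h := contract ℓ g with hh
        have hhdeg : 1 ≤ h.natDegree := by
          by_contra hc
          push_neg at hc
          have hz : h.natDegree = 0 := by omega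
          have he := natDegree_expand ℓ h
          rw [hz, zero_mul] at he
          rw [hexp] at he
          have := hdegpos htop
          omega
        obtain ⟨ξ, hξ⟩ := IsAlgClosed.exists_root h (by
          intro hdeg
          have := natDegree_eq_zero_iff_degree_le_zero.mpr (le_of_eq hdeg)
          omega)
        have hξne : ξ ≠ 0 := by
          rintro rfl
          have h0' : h.coeff 0 = g.coeff 0 := by
            rw [hh, coeff_contract hℓ0, zero_mul]
          rw [IsRoot, ← coeff_zero_eq_eval_zero] at hξ
          exact h0 (h0' ▸ hξ)
        refine ⟨ξ, hξne, ?_⟩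
        have hdvd : (X ^ ℓ - C ξ) ∣ g := by
          have h1 : (X - C ξ) ∣ h := dvd_iff_isRoot.mpr hξ
          have h2 := map_dvd (expand F ℓ) h1
          rwa [map_sub, expand_X, expand_C, hexp] at h2
        have hle : J ≤ Ideal.span {X ^ ℓ - C ξ} := by
          rw [hgJ, Ideal.span_le, Set.singleton_subset_iff]
          exact Ideal.mem_span_singleton.mpr hdvd
        exact (hmax _ hle (hξtop ξ) (hstabξ ξ)).symm
    · rintro (rfl | ⟨ξ, hξne, rfl⟩)
      · exact ⟨hXtop, fun J' hle hne _ => (hXmax.eq_of_le hne hle).symm⟩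
      · refine ⟨hξtop ξ, fun J' hle hne hstab' => ?_⟩
        have hJ'bot : J' ≠ ⊥ := by
          intro hb
          rw [hb, le_bot_iff, Ideal.span_singleton_eq_bot] at hle
          exact hξ0 ξ hle
        obtain ⟨g', hg'0, hg'J, hg'coeff⟩ := exists_gen hα0 σ hσ J' hJ'bot hstab'
        have hmem : (X ^ ℓ - C ξ) ∈ J' := hle (Ideal.subset_span rfl)
        have hdvd : g' ∣ (X ^ ℓ - C ξ) := by
          rwa [hg'J, Ideal.mem_span_singleton] at hmem
        have hm1 : 1 ≤ g'.natDegree := by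
          rcases Nat.eq_zero_or_pos g'.natDegree with h | h
          · exfalso; apply hne; rw [hg'J, Ideal.span_singleton_eq_top]
            exact isUnit_of_natDegree_zero hg'0 h
          · exact h
        have hc0 : g'.coeff 0 ≠ 0 := by
          intro h0
          have hXd : (X : F[X]) ∣ (X ^ ℓ - C ξ) := (X_dvd_iff.mpr h0).trans hdvd
          rw [X_dvd_iff, coeff_sub, coeff_X_pow, coeff_C] at hXd
          simp only [if_neg (by omega : ¬ (0 : ℕ) = ℓ)] at hXd
          simp at hXd
          exact hξne hXd
        have hα1' : α ^ g'.natDegree = 1 := by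
          have h2 : α ^ 0 = α ^ g'.natDegree := hg'coeff 0 hc0
          rwa [pow_zero, eq_comm] at h2
        have hℓdvd : ℓ ∣ g'.natDegree := order_dvd hℓ1 hℓ hmin hα1'
        have hmle : g'.natDegree ≤ ℓ := by
          have h3 := natDegree_le_of_dvd hdvd (hξ0 ξ)
          rwa [natDegree_X_pow_sub_C] at h3
        have hmeq : g'.natDegree = ℓ := le_antisymm hmle (Nat.le_of_dvd (by omega) hℓdvd)
        obtain ⟨q, hq⟩ := hdvd
        have hq0 : q ≠ 0 := by
          rintro rfl
          rw [mul_zero] at hq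
          exact hξ0 ξ hq
        have hqdeg : q.natDegree = 0 := by
          have h4 := congrArg natDegree hq
          rw [natDegree_X_pow_sub_C, natDegree_mul hg'0 hq0, hmeq] at h4
          omega
        have hqunit : IsUnit q := isUnit_of_natDegree_zero hq0 hqdeg
        rw [hg'J, Ideal.span_singleton_eq_span_singleton]
        exact ⟨hqunit.unit, by rw [IsUnit.unit_spec, ← hq]⟩

end Aux

/-- Let `F` be algebraically closed, `α ≠ 0, 1`, `φ(t) = αt + β`,
`t̃ = (α − 1)t + β`, and `J` a nonzero `φ`-stable ideal of `F[t]`.  Then: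
(i) if `α` is not a root of unity, `J` is maximal among proper `φ`-stable ideals iff
`J = (t̃)`; (ii) if `α` is a primitive `ℓ`-th root of unity, `J` is maximal among proper
`φ`-stable ideals iff `J = (t̃)` or `J = (t̃^ℓ − ξ)` for some `ξ ≠ 0`. -/
theorem stmt_3 {F : Type*} [Field F] [IsAlgClosed F] (α β : F)
    (hα0 : α ≠ 0) (hα1 : α ≠ 1)
    (φ : Polynomial F ≃ₐ[F] Polynomial F)
    (hφ : φ X = C α * X + C β)
    (J : Ideal (Polynomial F)) (hJbot : J ≠ ⊥)
    (hstab : ∀ f ∈ J, φ f ∈ J) :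
    ((∀ k : ℕ, 1 ≤ k → α ^ k ≠ 1) →
      ((J ≠ ⊤ ∧ ∀ J' : Ideal (Polynomial F),
          J ≤ J' → J' ≠ ⊤ → (∀ f ∈ J', φ f ∈ J') → J' = J) ↔
        J = Ideal.span {C (α - 1) * X + C β})) ∧
    (∀ ℓ : ℕ, 1 ≤ ℓ → α ^ ℓ = 1 → (∀ k : ℕ, 1 ≤ k → k < ℓ → α ^ k ≠ 1) →
      ((J ≠ ⊤ ∧ ∀ J' : Ideal (Polynomial F),
          J ≤ J' → J' ≠ ⊤ → (∀ f ∈ J', φ f ∈ J') → J' = J) ↔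
        (J = Ideal.span {C (α - 1) * X + C β} ∨
          ∃ ξ : F, ξ ≠ 0 ∧ J = Ideal.span {(C (α - 1) * X + C β) ^ ℓ - C ξ}))) := by
  letI : Invertible (α - 1) := invertibleOfNonzero (sub_ne_zero.mpr hα1)
  set u : F[X] := C (α - 1) * X + C β with hu
  set ψ : F[X] ≃ₐ[F] F[X] := algEquivCMulXAddC (α - 1) β with hψdef
  have hψ : ∀ f, ψ f = aeval u f := by
    intro f
    rw [hψdef, algEquivCMulXAddC_apply]
  have hψX : ψ X = u := by rw [hψ, aeval_X]
  have hψC : ∀ ξ : F, ψ (C ξ) = C ξ := by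
    intro ξ; rw [hψ, aeval_C, algebraMap_eq]
  have hφ' : ∀ f, φ f = aeval (C α * X + C β) f := by
    intro f; rw [algEquiv_apply_eq_aeval, hφ]
  have hφu : φ u = C α * u := by
    rw [hφ' u, hu]
    simp only [map_add, map_mul, aeval_C, aeval_X, algebraMap_eq]
    ring_nf
    rw [add_assoc]
    congr 1
    rw [← C_mul, ← C_add, ← C_mul]
    congr 1
    ring
  set σ : F[X] ≃ₐ[F] F[X] := (ψ.trans φ).trans ψ.symm with hσdef
  have hσapp : ∀ f, σ f = ψ.symm (φ (ψ f)) := fun f => rfl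
  have hψσ : ∀ f, ψ (σ f) = φ (ψ f) := by
    intro f; rw [hσapp]; exact ψ.apply_symm_apply _
  have hσX : σ X = C α * X := by
    rw [hσapp, hψX, hφu, map_mul]
    have h1 : ψ.symm (C α) = C α := ψ.symm_apply_eq.mpr (hψC α).symm
    have h2 : ψ.symm u = X := by rw [← hψX, ψ.symm_apply_apply]
    rw [h1, h2]
  have hσ : ∀ f, σ f = aeval (C α * X) f := by
    intro f; rw [algEquiv_apply_eq_aeval σ f, hσX]
  set J₀ : Ideal F[X] := Ideal.comap ψ J with hJ₀
  have hmem₀ : ∀ f, f ∈ J₀ ↔ ψ f ∈ J := fun f => Ideal.mem_comap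
  have hJ₀bot : J₀ ≠ ⊥ := by
    obtain ⟨x, hxJ, hx0⟩ := Submodule.exists_mem_ne_zero_of_ne_bot hJbot
    intro hb
    have hmem : ψ.symm x ∈ J₀ := by rw [hmem₀, ψ.apply_symm_apply]; exact hxJ
    rw [hb, Ideal.mem_bot] at hmem
    exact hx0 (by rw [← ψ.apply_symm_apply x, hmem, map_zero])
  have hJ₀stab : ∀ f ∈ J₀, σ f ∈ J₀ := by
    intro f hf
    rw [hmem₀] at hf ⊢
    rw [hψσ]
    exact hstab _ hf
  obtain ⟨core1, core2⟩ := core α hα0 σ hσ J₀ hJ₀bot hJ₀stab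
  have hJrec : Ideal.comap ψ.symm J₀ = J := by
    have h := comap_comap_symm ψ.symm J
    rwa [AlgEquiv.symm_symm] at h
  have maxiff : (J ≠ ⊤ ∧ ∀ J' : Ideal F[X],
        J ≤ J' → J' ≠ ⊤ → (∀ f ∈ J', φ f ∈ J') → J' = J) ↔
      (J₀ ≠ ⊤ ∧ ∀ K : Ideal F[X],
        J₀ ≤ K → K ≠ ⊤ → (∀ f ∈ K, σ f ∈ K) → K = J₀) := by
    constructor
    · rintro ⟨htop, hmax⟩
      refine ⟨fun h => htop ((comap_top_iff ψ J).mp h), fun K hle hKtop hKstab => ?_⟩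
      set K' : Ideal F[X] := Ideal.comap ψ.symm K with hK'def
      have hK'mem : ∀ f, f ∈ K' ↔ ψ.symm f ∈ K := fun f => Ideal.mem_comap
      have h1 : J ≤ K' := by
        intro f hf
        rw [hK'mem]
        apply hle
        rw [hmem₀, ψ.apply_symm_apply]
        exact hf
      have h2 : K' ≠ ⊤ := fun h => hKtop ((comap_top_iff ψ.symm K).mp h)
      have h3 : ∀ f ∈ K', φ f ∈ K' := by
        intro f hf
        rw [hK'mem] at hf ⊢
        have h4 := hKstab _ hf
        rwa [hσapp, ψ.apply_symm_apply] at h4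
      have h4 := hmax K' h1 h2 h3
      have h5 : Ideal.comap ψ K' = K := comap_comap_symm ψ K
      rw [← h5, h4]
    · rintro ⟨htop, hmax⟩
      refine ⟨fun h => htop (by rw [hJ₀, h]; exact Ideal.comap_top), ?_⟩
      intro J' hle hJ'top hJ'stab
      set K : Ideal F[X] := Ideal.comap ψ J' with hKdef
      have h1 : J₀ ≤ K := Ideal.comap_mono hle
      have h2 : K ≠ ⊤ := fun h => hJ'top ((comap_top_iff ψ J').mp h)
      have h3 : ∀ f ∈ K, σ f ∈ K := by
        intro f hf
        rw [Ideal.mem_comap] at hf ⊢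
        rw [hψσ]
        exact hJ'stab _ hf
      have h4 := hmax K h1 h2 h3
      have h5 : Ideal.comap ψ.symm K = J' := by
        have h := comap_comap_symm ψ.symm J'
        rwa [AlgEquiv.symm_symm] at h
      rw [← h5, h4, hJrec]
  have hspanu : J = Ideal.span {u} ↔ J₀ = Ideal.span {X} := by
    constructor
    · intro h
      rw [hJ₀, h, ← hψX, comap_span_apply]
    · intro h
      rw [← hJrec, h]
      have hX : (X : F[X]) = ψ.symm u := by rw [← hψX, ψ.symm_apply_apply]
      rw [hX, comap_span_apply ψ.symm u]
  constructor
  · intro hnru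
    rw [maxiff, core1 hnru]
    exact hspanu.symm
  · intro ℓ hℓ1 hℓ hmin
    have hspanξ : ∀ ξ : F,
        (J = Ideal.span {u ^ ℓ - C ξ} ↔ J₀ = Ideal.span {X ^ ℓ - C ξ}) := by
      intro ξ
      have hψp : ψ (X ^ ℓ - C ξ) = u ^ ℓ - C ξ := by
        rw [map_sub, map_pow, hψX, hψC]
      constructor
      · intro h
        rw [hJ₀, h, ← hψp, comap_span_apply]
      · intro h
        rw [← hJrec, h]
        have hX : (X ^ ℓ - C ξ : F[X]) = ψ.symm (u ^ ℓ - C ξ) := by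
          rw [← hψp, ψ.symm_apply_apply]
        rw [hX, comap_span_apply ψ.symm]
    rw [maxiff, core2 ℓ hℓ1 hℓ hmin]
    exact or_congr hspanu.symm
      (exists_congr fun ξ => and_congr_right fun _ => (hspanξ ξ).symm)
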